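/- The orthogonal group O(V) of a finite-dimensional Euclidean space V acts simply transitively on the set of maximal pointed convex cones in V. -/

import Mathlib

open Set

noncomputable section

def IsCone {V : Type*} [AddCommGroup V] [Module ℝ V] (C : Set V) : Prop :=
  (0 : V) ∈ C ∧ ∀ r : ℝ, 0 ≤ r → ∀ v ∈ C, r • v ∈ C

def IsConvexCone {V : Type*} [AddCommGroup V] [Module ℝ V] (C : Set V) : Prop :=
  IsCone C ∧ ∀ u ∈ C, ∀ v ∈ C, u + v ∈ C

def IsMaxPointedCone {V : Type*} [AddCommGroup V] [Module ℝ V] (D : Set V) : Prop :=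
  IsConvexCone D ∧ D ∩ (-D) = {0} ∧ D ∪ (-D) = Set.univ

def hatCone {V : Type*} [AddCommGroup V] [Module ℝ V] (X : Set V) : Set V :=
  {0} ∪ {v | ∃ r : ℝ, 0 ≤ r ∧ ∃ x ∈ X, v = r • x}

def sphereN (n : ℕ) : Set (EuclideanSpace ℝ (Fin (n + 1))) := Metric.sphere 0 1

def PhiPlus (n : ℕ) : Set (EuclideanSpace ℝ (Fin (n + 1))) :=
  {x | x ∈ sphereN n ∧ ∃ m : Fin (n + 1), 0 < x m ∧ ∀ i, m < i → x i = 0}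

def PhiMinus (n : ℕ) : Set (EuclideanSpace ℝ (Fin (n + 1))) := {x | -x ∈ PhiPlus n}

def Ln (n : ℕ) : Set (Set (EuclideanSpace ℝ (Fin (n + 1)))) :=
  {X | ∃ D, IsMaxPointedCone D ∧ X = D ∩ PhiPlus n}

open Module RealInnerProductSpace

section Basic

variable {V : Type*} [NormedAddCommGroup V] [InnerProductSpace ℝ V]

lemma mpc_zero_mem {D : Set V} (h : IsMaxPointedCone D) : (0 : V) ∈ D := h.1.1.1

lemma mpc_convex {D : Set V} (h : IsMaxPointedCone D) : Convex ℝ D := by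
  intro x hx y hy a b ha hb _
  exact h.1.2 _ (h.1.1.2 a ha x hx) _ (h.1.1.2 b hb y hy)

lemma mpc_mem_or {D : Set V} (h : IsMaxPointedCone D) (v : V) : v ∈ D ∨ -v ∈ D := by
  have hv : v ∈ D ∪ (-D) := by rw [h.2.2]; trivial
  rcases hv with hv | hv
  · exact Or.inl hv
  · exact Or.inr (Set.mem_neg.mp hv)

lemma mpc_eq_zero {D : Set V} (h : IsMaxPointedCone D) {v : V} (hv : v ∈ D) (hv' : -v ∈ D) :
    v = 0 := by
  have : v ∈ D ∩ (-D) := ⟨hv, Set.mem_neg.mpr hv'⟩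
  rw [h.2.1] at this
  exact this

lemma pos_mem {D : Set V} (h : IsMaxPointedCone D) {u : V} (hun : ∀ v ∈ D, 0 ≤ ⟪u, v⟫)
    {v : V} (hv : 0 < ⟪u, v⟫) : v ∈ D := by
  rcases mpc_mem_or h v with hv' | hv'
  · exact hv'
  · have := hun _ hv'
    rw [inner_neg_right] at this
    linarith

end Basic
section Normal

variable {V : Type*} [NormedAddCommGroup V] [InnerProductSpace ℝ V]

lemma mpc_span {D : Set V} (h : IsMaxPointedCone D) : Submodule.span ℝ D = ⊤ := by
  rw [eq_top_iff]
  intro v _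
  rcases mpc_mem_or h v with hv | hv
  · exact Submodule.subset_span hv
  · have := Submodule.neg_mem _ (Submodule.subset_span (R := ℝ) hv)
    rwa [neg_neg] at this

lemma exists_normal [FiniteDimensional ℝ V] (hpos : 0 < finrank ℝ V) {D : Set V}
    (h : IsMaxPointedCone D) : ∃ u : V, ‖u‖ = 1 ∧ ∀ v ∈ D, 0 ≤ ⟪u, v⟫ := by
  have hconv := mpc_convex h
  have h0D : (0 : V) ∈ D := mpc_zero_mem h
  -- the affine span of `D` is everything
  have hspan : affineSpan ℝ D = ⊤ := by
    rw [AffineSubspace.affineSpan_eq_top_iff_vectorSpan_eq_top_of_nonempty ℝ V V ⟨0, h0D⟩,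
      vectorSpan_eq_span_vsub_set_right ℝ h0D]
    have himg : (· -ᵥ (0 : V)) '' D = D := by
      ext x; simp [vsub_eq_sub]
    rw [himg]
    exact mpc_span h
  have hint : (interior D).Nonempty :=
    (Convex.interior_nonempty_iff_affineSpan_eq_top hconv).2 hspan
  -- `0` is not in the interior
  have h0 : (0 : V) ∉ interior D := by
    intro h0
    rcases Metric.mem_nhds_iff.1 (mem_interior_iff_mem_nhds.1 h0) with ⟨ε, hε, hball⟩
    have : Nontrivial V := Module.nontrivial_of_finrank_pos hpos
    obtain ⟨x, hx⟩ := exists_ne (0 : V)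
    have hxn : 0 < ‖x‖ := norm_pos_iff.mpr hx
    set y : V := (ε / (2 * ‖x‖)) • x with hy
    have hc : 0 < ε / (2 * ‖x‖) := by positivity
    have hy0 : y ≠ 0 := smul_ne_zero (ne_of_gt hc) hx
    have hyn : ‖y‖ < ε := by
      rw [hy, norm_smul, Real.norm_eq_abs, abs_of_pos hc, div_mul_eq_mul_div, mul_comm]
      rw [div_lt_iff₀ (by positivity)]
      nlinarith
    have hymem : y ∈ D := hball (by simpa [Metric.mem_ball] using hyn)
    have hymem' : -y ∈ D := hball (by simpa [Metric.mem_ball] using hyn)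
    exact hy0 (mpc_eq_zero h hymem hymem')
  -- separating functional
  obtain ⟨f, hf⟩ := geometric_hahn_banach_open_point hconv.interior isOpen_interior h0
  have hf0 : ∀ a ∈ interior D, f a < 0 := by simpa using hf
  have hfD : ∀ v ∈ D, f v ≤ 0 := by
    intro v hv
    by_contra hcon
    push_neg at hcon
    obtain ⟨a, ha⟩ := hint
    have hfa : f a < 0 := hf0 a ha
    set t : ℝ := f v / (f v - f a) with ht
    have hden : 0 < f v - f a := by linarith
    have ht0 : 0 < t := div_pos hcon hden
    have ht1 : t < 1 := (div_lt_one hden).mpr (by linarith)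
    have hmem : t • a + (1 - t) • v ∈ interior D :=
      hconv.combo_interior_self_mem_interior ha hv ht0 (by linarith) (by ring)
    have hval := hf0 _ hmem
    rw [map_add, map_smul, map_smul] at hval
    have hcancel : t * (f v - f a) = f v := div_mul_cancel₀ _ (ne_of_gt hden)
    simp only [smul_eq_mul] at hval
    nlinarith
  -- Riesz representation
  set w := (InnerProductSpace.toDual ℝ V).symm f with hwdef
  have hw : ∀ v, ⟪w, v⟫ = f v := fun v => InnerProductSpace.toDual_symm_apply
  have hwne : w ≠ 0 := by
    obtain ⟨a, ha⟩ := hint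
    intro hw0
    have := hw a
    rw [hw0, inner_zero_left] at this
    have := hf0 a ha
    linarith
  have hwn : 0 < ‖w‖ := norm_pos_iff.mpr hwne
  refine ⟨-((‖w‖⁻¹ : ℝ) • w), ?_, ?_⟩
  · rw [norm_neg, norm_smul, Real.norm_eq_abs, abs_of_pos (by positivity)]
    field_simp
  · intro v hv
    rw [inner_neg_left, real_inner_smul_left, hw]
    have := hfD v hv
    have h1 : 0 ≤ ‖w‖⁻¹ := by positivity
    nlinarith

lemma normal_unique {D : Set V} (h : IsMaxPointedCone D) {u u' : V}
    (hu : ‖u‖ = 1) (hun : ∀ v ∈ D, 0 ≤ ⟪u, v⟫)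
    (hu' : ‖u'‖ = 1) (hun' : ∀ v ∈ D, 0 ≤ ⟪u', v⟫) : u = u' := by
  have humem : u ∈ D := by
    apply pos_mem h hun
    rw [real_inner_self_eq_norm_sq, hu]; norm_num
  have key : ∀ v : V, ⟪u, v⟫ = 0 → 0 ≤ ⟪u', v⟫ := by
    intro v hv
    by_contra hneg
    push_neg at hneg
    set t : ℝ := -⟪u', v⟫ / 2 with htd
    have ht : 0 < t := by rw [htd]; linarith
    have hmem : v + t • u ∈ D := by
      apply pos_mem h hun
      rw [inner_add_right, hv, real_inner_smul_right, real_inner_self_eq_norm_sq, hu]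
      norm_num; exact ht
    have := hun' _ hmem
    rw [inner_add_right, real_inner_smul_right] at this
    have hle : ⟪u', u⟫ ≤ 1 := by
      have := real_inner_le_norm u' u
      rw [hu, hu'] at this; linarith
    nlinarith
  set c : ℝ := ⟪u, u'⟫ with hc
  have hperp : ⟪u, u' - c • u⟫ = 0 := by
    rw [inner_sub_right, real_inner_smul_right, real_inner_self_eq_norm_sq, hu]
    ring
  have h1 : 0 ≤ ⟪u', u' - c • u⟫ := key _ hperp
  have h2 : 0 ≤ ⟪u', -(u' - c • u)⟫ := by
    apply key
    rw [inner_neg_right, hperp, neg_zero]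
  rw [inner_neg_right] at h2
  have h3 : ⟪u', u' - c • u⟫ = 0 := le_antisymm (by linarith) h1
  rw [inner_sub_right, real_inner_smul_right, real_inner_self_eq_norm_sq, hu'] at h3
  have hcomm : ⟪u', u⟫ = c := by rw [hc, real_inner_comm]
  rw [hcomm] at h3
  have hcnn : 0 ≤ c := by
    have := hun' u humem
    rw [hcomm] at this; exact this
  have hc1 : c = 1 := by nlinarith
  have hnorm : ‖u - u'‖ ^ 2 = 0 := by
    rw [norm_sub_sq_real, hu, hu', ← hc, hc1]; norm_num
  have : u - u' = 0 := by
    rw [pow_eq_zero_iff (by norm_num)] at hnorm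
    exact norm_eq_zero.mp hnorm
  exact sub_eq_zero.mp this
end Normal
section Constructions

variable {V W : Type*} [NormedAddCommGroup V] [InnerProductSpace ℝ V]
  [NormedAddCommGroup W] [InnerProductSpace ℝ W]

/-- restriction of a cone to a submodule -/
lemma mpc_restrict {D : Set V} (h : IsMaxPointedCone D) (K : Submodule ℝ V) :
    IsMaxPointedCone ((↑) ⁻¹' D : Set K) := by
  refine ⟨⟨⟨?_, ?_⟩, ?_⟩, ?_, ?_⟩
  · show ((0 : K) : V) ∈ D
    rw [Submodule.coe_zero]; exact mpc_zero_mem h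
  · intro r hr v hv
    show ((r • v : K) : V) ∈ D
    rw [Submodule.coe_smul]
    exact h.1.1.2 r hr _ hv
  · intro a ha b hb
    show ((a + b : K) : V) ∈ D
    rw [Submodule.coe_add]
    exact h.1.2 _ ha _ hb
  · ext v
    simp only [Set.mem_inter_iff, Set.mem_preimage, Set.mem_neg, Set.mem_singleton_iff]
    constructor
    · rintro ⟨hv, hv'⟩
      have : ((-v : K) : V) ∈ D := hv'
      rw [Submodule.coe_neg] at this
      have := mpc_eq_zero h hv this
      exact Subtype.ext this
    · rintro rfl
      constructor
      · show ((0 : K) : V) ∈ D; rw [Submodule.coe_zero]; exact mpc_zero_mem h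
      · show ((-(0 : K) : K) : V) ∈ D; simp; exact mpc_zero_mem h
  · ext v
    simp only [Set.mem_union, Set.mem_preimage, Set.mem_neg, Set.mem_univ, iff_true]
    rcases mpc_mem_or h (v : V) with hv | hv
    · exact Or.inl hv
    · right
      show ((-v : K) : V) ∈ D
      rwa [Submodule.coe_neg]

/-- restriction of a linear isometry equivalence to submodules -/
def restrictIso (T : V ≃ₗᵢ[ℝ] W) (K : Submodule ℝ V) (L : Submodule ℝ W)
    (h : ∀ v : K, T v ∈ L) (h' : ∀ w : L, T.symm w ∈ K) : K ≃ₗᵢ[ℝ] L :=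
  { toLinearEquiv :=
    { toFun := fun k => ⟨T k, h k⟩
      map_add' := fun a b => Subtype.ext (by simp)
      map_smul' := fun c a => Subtype.ext (by simp)
      invFun := fun w => ⟨T.symm w, h' w⟩
      left_inv := fun k => Subtype.ext (by simp)
      right_inv := fun w => Subtype.ext (by simp) }
    norm_map' := fun k => by
      show ‖T (k : V)‖ = ‖(k : V)‖
      rw [T.norm_map] }

@[simp] lemma restrictIso_apply (T : V ≃ₗᵢ[ℝ] W) (K : Submodule ℝ V) (L : Submodule ℝ W)
    (h : ∀ v : K, T v ∈ L) (h' : ∀ w : L, T.symm w ∈ K) (k : K) :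
    (restrictIso T K L h h' k : W) = T k := rfl

end Constructions
section Extend

variable {V W : Type*} [NormedAddCommGroup V] [InnerProductSpace ℝ V]
  [NormedAddCommGroup W] [InnerProductSpace ℝ W]

/-- orthogonal component relative to a unit vector -/
def perpPart (u : V) (v : V) : ((ℝ ∙ u)ᗮ : Submodule ℝ V) :=
  ⟨v - (⟪u, v⟫ / (‖u‖ ^ 2 : ℝ)) • u, by
    rw [Submodule.mem_orthogonal_singleton_iff_inner_right, inner_sub_right,
      real_inner_smul_right, real_inner_self_eq_norm_sq]
    rcases eq_or_ne u 0 with rfl | hu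
    · simp
    · have : ‖u‖ ^ 2 ≠ 0 := pow_ne_zero 2 (norm_ne_zero_iff.mpr hu)
      field_simp
      ring⟩

lemma perpPart_coe {u : V} (hu : ‖u‖ = 1) (v : V) :
    ((perpPart u v : V)) = v - ⟪u, v⟫ • u := by
  show v - (⟪u, v⟫ / (‖u‖ ^ 2 : ℝ)) • u = v - ⟪u, v⟫ • u
  rw [hu]; norm_num

lemma perpPart_decomp {u : V} (hu : ‖u‖ = 1) (v : V) :
    v = ⟪u, v⟫ • u + ((perpPart u v : V)) := by
  rw [perpPart_coe hu]; abel

lemma perpPart_of_inner_zero {u : V} (hu : ‖u‖ = 1) {v : V} (hv : ⟪u, v⟫ = 0) (hm : v ∈ (ℝ ∙ u)ᗮ) :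
    perpPart u v = ⟨v, hm⟩ := by
  apply Subtype.ext
  rw [perpPart_coe hu, hv]
  simp

/-- extend an isometry between orthogonal complements -/
def extendIso {u₁ : V} {u₂ : W} (h₁ : ‖u₁‖ = 1) (h₂ : ‖u₂‖ = 1)
    (S : ((ℝ ∙ u₁)ᗮ : Submodule ℝ V) ≃ₗᵢ[ℝ] ((ℝ ∙ u₂)ᗮ : Submodule ℝ W)) : V ≃ₗᵢ[ℝ] W :=
  { toLinearEquiv :=
    { toFun := fun v => ⟪u₁, v⟫ • u₂ + ↑(S (perpPart u₁ v))
      map_add' := fun a b => by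
        show ⟪u₁, a + b⟫ • u₂ + ↑(S (perpPart u₁ (a + b))) =
          (⟪u₁, a⟫ • u₂ + ↑(S (perpPart u₁ a))) + (⟪u₁, b⟫ • u₂ + ↑(S (perpPart u₁ b)))
        have hp : perpPart u₁ (a + b) = perpPart u₁ a + perpPart u₁ b := by
          apply Subtype.ext
          push_cast [perpPart_coe h₁]
          rw [inner_add_right, add_smul]
          abel
        rw [hp, map_add, inner_add_right, add_smul, Submodule.coe_add]
        abel
      map_smul' := fun c a => by
        show ⟪u₁, c • a⟫ • u₂ + ↑(S (perpPart u₁ (c • a))) =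
          c • (⟪u₁, a⟫ • u₂ + ↑(S (perpPart u₁ a)))
        have hp : perpPart u₁ (c • a) = c • perpPart u₁ a := by
          apply Subtype.ext
          push_cast [perpPart_coe h₁]
          rw [real_inner_smul_right, smul_sub, smul_smul]
        rw [hp, map_smul, real_inner_smul_right, Submodule.coe_smul, smul_add, smul_smul]
      invFun := fun w => ⟪u₂, w⟫ • u₁ + ↑(S.symm (perpPart u₂ w))
      left_inv := fun v => by
        have horth : ⟪u₂, (S (perpPart u₁ v) : W)⟫ = 0 :=
          Submodule.mem_orthogonal_singleton_iff_inner_right.mp (S (perpPart u₁ v)).2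
        have hinner : ⟪u₂, ⟪u₁, v⟫ • u₂ + ↑(S (perpPart u₁ v))⟫ = ⟪u₁, v⟫ := by
          rw [inner_add_right, real_inner_smul_right, real_inner_self_eq_norm_sq, h₂, horth]
          ring
        have hmem : (⟪u₁, v⟫ • u₂ + ↑(S (perpPart u₁ v))) - ⟪u₁, v⟫ • u₂ ∈ (ℝ ∙ u₂)ᗮ := by
          simpa using (S (perpPart u₁ v)).2
        have hperp : perpPart u₂ (⟪u₁, v⟫ • u₂ + ↑(S (perpPart u₁ v))) = S (perpPart u₁ v) := by
          apply Subtype.ext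
          rw [perpPart_coe h₂, hinner]
          abel
        show ⟪u₂, ⟪u₁, v⟫ • u₂ + ↑(S (perpPart u₁ v))⟫ • u₁ +
            ↑(S.symm (perpPart u₂ (⟪u₁, v⟫ • u₂ + ↑(S (perpPart u₁ v))))) = v
        rw [hinner, hperp, LinearIsometryEquiv.symm_apply_apply, perpPart_coe h₁]
        abel
      right_inv := fun w => by
        have horth : ⟪u₁, (S.symm (perpPart u₂ w) : V)⟫ = 0 :=
          Submodule.mem_orthogonal_singleton_iff_inner_right.mp (S.symm (perpPart u₂ w)).2
        have hinner : ⟪u₁, ⟪u₂, w⟫ • u₁ + ↑(S.symm (perpPart u₂ w))⟫ = ⟪u₂, w⟫ := by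
          rw [inner_add_right, real_inner_smul_right, real_inner_self_eq_norm_sq, h₁, horth]
          ring
        have hperp : perpPart u₁ (⟪u₂, w⟫ • u₁ + ↑(S.symm (perpPart u₂ w)))
            = S.symm (perpPart u₂ w) := by
          apply Subtype.ext
          rw [perpPart_coe h₁, hinner]
          abel
        show ⟪u₁, ⟪u₂, w⟫ • u₁ + ↑(S.symm (perpPart u₂ w))⟫ • u₂ +
            ↑(S (perpPart u₁ (⟪u₂, w⟫ • u₁ + ↑(S.symm (perpPart u₂ w))))) = w
        rw [hinner, hperp, LinearIsometryEquiv.apply_symm_apply, perpPart_coe h₂]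
        abel }
    norm_map' := fun v => by
      show ‖⟪u₁, v⟫ • u₂ + ↑(S (perpPart u₁ v))‖ = ‖v‖
      have horth2 : ⟪⟪u₁, v⟫ • u₂, (S (perpPart u₁ v) : W)⟫ = 0 := by
        rw [real_inner_smul_left,
          Submodule.mem_orthogonal_singleton_iff_inner_right.mp (S (perpPart u₁ v)).2]
        ring
      have horth1 : ⟪⟪u₁, v⟫ • u₁, (perpPart u₁ v : V)⟫ = 0 := by
        rw [real_inner_smul_left,
          Submodule.mem_orthogonal_singleton_iff_inner_right.mp (perpPart u₁ v).2]
        ring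
      have hnS : ‖(S (perpPart u₁ v) : W)‖ = ‖(perpPart u₁ v : V)‖ := by
        have : ‖(S (perpPart u₁ v) : W)‖ = ‖S (perpPart u₁ v)‖ := rfl
        rw [this, S.norm_map]
        rfl
      have hsq : ‖⟪u₁, v⟫ • u₂ + ↑(S (perpPart u₁ v))‖ ^ 2 = ‖v‖ ^ 2 := by
        conv_rhs => rw [perpPart_decomp h₁ v]
        rw [norm_add_sq_real, norm_add_sq_real, horth1, horth2, hnS, norm_smul, norm_smul,
          h₁, h₂]
      have := congrArg Real.sqrt hsq
      rwa [Real.sqrt_sq (norm_nonneg _), Real.sqrt_sq (norm_nonneg _)] at this }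

lemma extendIso_apply {u₁ : V} {u₂ : W} (h₁ : ‖u₁‖ = 1) (h₂ : ‖u₂‖ = 1)
    (S : ((ℝ ∙ u₁)ᗮ : Submodule ℝ V) ≃ₗᵢ[ℝ] ((ℝ ∙ u₂)ᗮ : Submodule ℝ W)) (v : V) :
    extendIso h₁ h₂ S v = ⟪u₁, v⟫ • u₂ + ↑(S (perpPart u₁ v)) := rfl

/-- trivial isometry between subsingleton spaces -/
def trivIso (V W : Type*) [NormedAddCommGroup V] [InnerProductSpace ℝ V]
    [NormedAddCommGroup W] [InnerProductSpace ℝ W] [Subsingleton V] [Subsingleton W] :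
    V ≃ₗᵢ[ℝ] W :=
  { toLinearEquiv :=
    { toFun := fun _ => 0
      map_add' := by intros; simp
      map_smul' := by intros; simp
      invFun := fun _ => 0
      left_inv := fun v => Subsingleton.elim _ _
      right_inv := fun w => Subsingleton.elim _ _ }
    norm_map' := fun v => by
      show ‖(0 : W)‖ = ‖v‖
      rw [Subsingleton.elim v 0, norm_zero, norm_zero] }

end Extend
section Key

universe u

lemma key (n : ℕ) : ∀ (V W : Type u) [NormedAddCommGroup V] [InnerProductSpace ℝ V]
    [NormedAddCommGroup W] [InnerProductSpace ℝ W] [FiniteDimensional ℝ V]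
    [FiniteDimensional ℝ W], finrank ℝ V = n → finrank ℝ W = n →
    ∀ (D₁ : Set V) (D₂ : Set W), IsMaxPointedCone D₁ → IsMaxPointedCone D₂ →
    ∃! T : V ≃ₗᵢ[ℝ] W, T '' D₁ = D₂ := by
  induction n with
  | zero =>
    intro V W _ _ _ _ _ _ hV hW D₁ D₂ h₁ h₂
    have hsV : Subsingleton V := Module.finrank_zero_iff.mp hV
    have hsW : Subsingleton W := Module.finrank_zero_iff.mp hW
    have hD₁ : D₁ = {0} :=
      Set.eq_singleton_iff_unique_mem.mpr ⟨mpc_zero_mem h₁, fun x _ => Subsingleton.elim x 0⟩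
    have hD₂ : D₂ = {0} :=
      Set.eq_singleton_iff_unique_mem.mpr ⟨mpc_zero_mem h₂, fun x _ => Subsingleton.elim x 0⟩
    refine ⟨trivIso V W, ?_, ?_⟩
    · show trivIso V W '' D₁ = D₂
      rw [hD₁, hD₂, Set.image_singleton, map_zero]
    · intro T' _
      exact LinearIsometryEquiv.ext fun v => Subsingleton.elim _ _
  | succ n ih =>
    intro V W _ _ _ _ _ _ hV hW D₁ D₂ h₁ h₂
    obtain ⟨u₁, hu₁, hn₁⟩ := exists_normal (by omega) h₁
    obtain ⟨u₂, hu₂, hn₂⟩ := exists_normal (by omega) h₂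
    have hu₁0 : u₁ ≠ 0 := by
      intro h0; rw [h0, norm_zero] at hu₁; norm_num at hu₁
    have hu₂0 : u₂ ≠ 0 := by
      intro h0; rw [h0, norm_zero] at hu₂; norm_num at hu₂
    set K₁ : Submodule ℝ V := (ℝ ∙ u₁)ᗮ with hK₁def
    set K₂ : Submodule ℝ W := (ℝ ∙ u₂)ᗮ with hK₂def
    have hK₁ : finrank ℝ K₁ = n := by
      have h1 := Submodule.finrank_add_finrank_orthogonal (K := (ℝ ∙ u₁ : Submodule ℝ V))
      rw [finrank_span_singleton hu₁0, hV] at h1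
      rw [hK₁def]
      omega
    have hK₂ : finrank ℝ K₂ = n := by
      have h1 := Submodule.finrank_add_finrank_orthogonal (K := (ℝ ∙ u₂ : Submodule ℝ W))
      rw [finrank_span_singleton hu₂0, hW] at h1
      rw [hK₂def]
      omega
    have hD₁' : IsMaxPointedCone ((↑) ⁻¹' D₁ : Set K₁) := mpc_restrict h₁ K₁
    have hD₂' : IsMaxPointedCone ((↑) ⁻¹' D₂ : Set K₂) := mpc_restrict h₂ K₂
    obtain ⟨S, hS, hSuniq⟩ := ih K₁ K₂ hK₁ hK₂ _ _ hD₁' hD₂'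
    set T := extendIso hu₁ hu₂ S with hTdef
    have hTperp : ∀ k : K₁, T ↑k = ↑(S k) := by
      intro k
      have hk : ⟪u₁, (k : V)⟫ = 0 :=
        Submodule.mem_orthogonal_singleton_iff_inner_right.mp k.2
      rw [hTdef, extendIso_apply, hk, perpPart_of_inner_zero hu₁ hk k.2]
      simp
    have hTinner : ∀ v, ⟪u₂, T v⟫ = ⟪u₁, v⟫ := by
      intro v
      rw [hTdef, extendIso_apply, inner_add_right, real_inner_smul_right,
        real_inner_self_eq_norm_sq, hu₂,
        Submodule.mem_orthogonal_singleton_iff_inner_right.mp (S (perpPart u₁ v)).2]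
      ring
    have hTu : T u₁ = u₂ := by
      have hz : perpPart u₁ u₁ = 0 := by
        apply Subtype.ext
        rw [Submodule.coe_zero, perpPart_coe hu₁, real_inner_self_eq_norm_sq, hu₁]
        simp
      rw [hTdef, extendIso_apply, hz, map_zero, real_inner_self_eq_norm_sq, hu₁]
      simp
    have hT : T '' D₁ = D₂ := by
      ext w
      constructor
      · rintro ⟨v, hv, rfl⟩
        rcases (hn₁ v hv).lt_or_eq with hpos | heq
        · exact pos_mem h₂ hn₂ (by rw [hTinner]; exact hpos)
        · have hvK : v ∈ K₁ :=
            Submodule.mem_orthogonal_singleton_iff_inner_right.mpr heq.symm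
          have hTv : T v = ↑(S ⟨v, hvK⟩) := hTperp ⟨v, hvK⟩
          rw [hTv]
          have hmem : (⟨v, hvK⟩ : K₁) ∈ ((↑) ⁻¹' D₁ : Set K₁) := hv
          have := hS ▸ Set.mem_image_of_mem S hmem
          exact this
      · intro hw
        rcases (hn₂ w hw).lt_or_eq with hpos | heq
        · refine ⟨T.symm w, ?_, by simp⟩
          apply pos_mem h₁ hn₁
          have : ⟪u₁, T.symm w⟫ = ⟪u₂, w⟫ := by
            conv_lhs => rw [← T.inner_map_map u₁ (T.symm w), hTu,
              T.apply_symm_apply]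
          rw [this]
          exact hpos
        · have hwK : w ∈ K₂ :=
            Submodule.mem_orthogonal_singleton_iff_inner_right.mpr heq.symm
          have hmem : (⟨w, hwK⟩ : K₂) ∈ ((↑) ⁻¹' D₂ : Set K₂) := hw
          rw [← hS] at hmem
          obtain ⟨k, hk, hks⟩ := hmem
          exact ⟨↑k, hk, by rw [hTperp k, hks]⟩
    refine ⟨T, hT, ?_⟩
    intro T' hT'
    -- T' maps u₁ to u₂
    have hT'u : T' u₁ = u₂ := by
      apply normal_unique h₂ (by rw [T'.norm_map]; exact hu₁) ?_ hu₂ hn₂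
      intro w hw
      rw [← hT'] at hw
      obtain ⟨v, hv, rfl⟩ := hw
      rw [T'.inner_map_map]
      exact hn₁ v hv
    have hmapK : ∀ k : K₁, T' ↑k ∈ K₂ := by
      intro k
      apply Submodule.mem_orthogonal_singleton_iff_inner_right.mpr
      rw [← hT'u, T'.inner_map_map]
      exact Submodule.mem_orthogonal_singleton_iff_inner_right.mp k.2
    have hmapK' : ∀ m : K₂, T'.symm ↑m ∈ K₁ := by
      intro m
      apply Submodule.mem_orthogonal_singleton_iff_inner_right.mpr
      have : ⟪u₁, T'.symm ↑m⟫ = ⟪T' u₁, (m : W)⟫ := by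
        conv_rhs => rw [← T'.apply_symm_apply ↑m]
        rw [T'.inner_map_map]
      rw [this, hT'u]
      exact Submodule.mem_orthogonal_singleton_iff_inner_right.mp m.2
    set S' := restrictIso T' K₁ K₂ hmapK hmapK' with hS'def
    have hS'img : S' '' ((↑) ⁻¹' D₁ : Set K₁) = ((↑) ⁻¹' D₂ : Set K₂) := by
      ext m
      constructor
      · rintro ⟨k, hk, rfl⟩
        show ((S' k : K₂) : W) ∈ D₂
        rw [restrictIso_apply, ← hT']
        exact Set.mem_image_of_mem _ hk
      · intro hm
        have hmD : (m : W) ∈ D₂ := hm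
        rw [← hT'] at hmD
        obtain ⟨v, hv, hveq⟩ := hmD
        refine ⟨⟨T'.symm ↑m, hmapK' m⟩, ?_, ?_⟩
        · show (T'.symm (m : W) : V) ∈ D₁
          rw [← hveq, T'.symm_apply_apply]
          exact hv
        · apply Subtype.ext
          rw [restrictIso_apply]
          exact T'.apply_symm_apply _
    have hSS : S' = S := hSuniq S' hS'img
    apply LinearIsometryEquiv.ext
    intro v
    have hdec : v = ⟪u₁, v⟫ • u₁ + ((perpPart u₁ v : V)) := perpPart_decomp hu₁ v
    calc T' v = T' (⟪u₁, v⟫ • u₁ + ((perpPart u₁ v : V))) := by rw [← hdec]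
      _ = ⟪u₁, v⟫ • T' u₁ + T' ((perpPart u₁ v : V)) := by rw [map_add, map_smul]
      _ = ⟪u₁, v⟫ • u₂ + ↑(S' (perpPart u₁ v)) := by rw [hT'u, restrictIso_apply]
      _ = ⟪u₁, v⟫ • u₂ + ↑(S (perpPart u₁ v)) := by rw [hSS]
      _ = T v := (extendIso_apply hu₁ hu₂ S v).symm

end Key

theorem stmt11 {V : Type*} [NormedAddCommGroup V] [InnerProductSpace ℝ V]
    [FiniteDimensional ℝ V] (D₁ D₂ : Set V)
    (h₁ : IsMaxPointedCone D₁) (h₂ : IsMaxPointedCone D₂) :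
    ∃! T : V ≃ₗᵢ[ℝ] V, T '' D₁ = D₂ := key (finrank ℝ V) V V rfl rfl D₁ D₂ h₁ h₂
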